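/- Let p ∈ [1,∞) and let N₁, N₂ be measurable complex-valued functions on the triangle Ω = {(x,t) : 0 ≤ t ≤ x ≤ 1} with finite X_{1,p}-norms (respectively finite X_{∞,p}-norms). Then the composition kernel N(x,t) := (N₁*N₂)(x,t) := ∫_t^x N₁(x,ξ) N₂(ξ,t) dξ satisfies ‖N₁*N₂‖_{X_{1,p}} ≤ ‖N₁‖_{X_{1,p}} · ‖N₂‖_{X_{1,p}} (respectively ‖N₁*N₂‖_{X_{∞,p}} ≤ ‖N₁‖_{X_{∞,p}} · ‖N₂‖_{X_{∞,p}}); i.e., the spaces X_{1,p}(Ω) and X_{∞,p}(Ω) are Banach algebras under the composition of kernels. -/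

import Mathlib

open MeasureTheory
open scoped ENNReal

lemma aux_ofReal (z : ℂ) {p : ℝ} (hp : 0 ≤ p) :
    ENNReal.ofReal (‖z‖ ^ p) = (‖z‖₊ : ℝ≥0∞) ^ p := by
  rw [← ENNReal.ofReal_rpow_of_nonneg (norm_nonneg z) hp, ofReal_norm, enorm_eq_nnnorm]

lemma aux_holder {α : Type*} [MeasurableSpace α] (μ : Measure α) {p : ℝ} (hp : 1 ≤ p)
    {f g : α → ℝ≥0∞} (hf : AEMeasurable f μ) (hg : AEMeasurable g μ) :
    (∫⁻ a, f a * g a ∂μ) ^ p ≤ (∫⁻ a, f a ^ p * g a ∂μ) * (∫⁻ a, g a ∂μ) ^ (p - 1) := by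
  rcases eq_or_lt_of_le hp with h1 | h1
  · simp [← h1]
  have hp0 : p ≠ 0 := by positivity
  set q := Real.conjExponent p with hq
  have hpq : p.HolderConjugate q := Real.HolderConjugate.conjExponent h1
  have key : (∫⁻ a, f a * g a ∂μ) ≤
      (∫⁻ a, f a ^ p * g a ∂μ) ^ (1/p) * (∫⁻ a, g a ∂μ) ^ (1/q) := by
    have h := ENNReal.lintegral_mul_le_Lp_mul_Lq μ hpq
      (f := fun a => f a * g a ^ (1/p)) (g := fun a => g a ^ (1/q))
      ((hf.mul (hg.pow_const _))) (hg.pow_const _)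
    have e1 : ∀ a, ((fun a => f a * g a ^ (1/p)) * fun a => g a ^ (1/q)) a = f a * g a := by
      intro a
      simp only [Pi.mul_apply]
      rw [mul_assoc, ← ENNReal.rpow_add_of_nonneg _ _ hpq.one_div_nonneg hpq.symm.one_div_nonneg]
      rw [one_div, one_div, hpq.inv_add_inv_eq_one, ENNReal.rpow_one]
    have e2 : ∀ a, (f a * g a ^ (1/p)) ^ p = f a ^ p * g a := by
      intro a
      rw [ENNReal.mul_rpow_of_nonneg _ _ hpq.nonneg, ← ENNReal.rpow_mul,
        one_div_mul_cancel hp0, ENNReal.rpow_one]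
    have e3 : ∀ a, (g a ^ (1/q)) ^ q = g a := by
      intro a
      rw [← ENNReal.rpow_mul, one_div_mul_cancel hpq.symm.ne_zero, ENNReal.rpow_one]
    simp only [e1, e2, e3] at h
    exact h
  calc (∫⁻ a, f a * g a ∂μ) ^ p
      ≤ ((∫⁻ a, f a ^ p * g a ∂μ) ^ (1/p) * (∫⁻ a, g a ∂μ) ^ (1/q)) ^ p :=
        ENNReal.rpow_le_rpow key hpq.nonneg
    _ = (∫⁻ a, f a ^ p * g a ∂μ) * (∫⁻ a, g a ∂μ) ^ (p - 1) := by
        rw [ENNReal.mul_rpow_of_nonneg _ _ hpq.nonneg, ← ENNReal.rpow_mul, ← ENNReal.rpow_mul,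
          one_div_mul_cancel hp0, ENNReal.rpow_one]
        congr 2
        rw [hq, Real.conjExponent]
        field_simp

lemma aux_jensen {α : Type*} [MeasurableSpace α] (μ : Measure α) (hμ : μ Set.univ ≤ 1)
    {p : ℝ} (hp : 1 ≤ p) {f : α → ℝ≥0∞} (hf : AEMeasurable f μ) :
    (∫⁻ a, f a ∂μ) ^ p ≤ ∫⁻ a, f a ^ p ∂μ := by
  have h := aux_holder μ hp hf (g := fun _ => 1) aemeasurable_const
  simp only [mul_one, lintegral_one] at h
  calc (∫⁻ a, f a ∂μ) ^ p ≤ (∫⁻ a, f a ^ p ∂μ) * (μ Set.univ) ^ (p - 1) := h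
    _ ≤ (∫⁻ a, f a ^ p ∂μ) * 1 :=
        mul_le_mul_right (ENNReal.rpow_le_one hμ (by linarith)) _
    _ = _ := mul_one _

/-- The `X_{1,p}`-norm of a kernel on the triangle `Ω = {0 ≤ t ≤ x ≤ 1}`:
`‖f‖_{X_{1,p}} = ( esssup_{t∈[0,1]} ∫_t^1 |f(x,t)|^p dx )^{1/p}`. -/
noncomputable def X1pNorm (p : ℝ) (f : ℝ → ℝ → ℂ) : ℝ≥0∞ :=
  (essSup (fun t => ∫⁻ x in Set.Icc t 1, ENNReal.ofReal (‖f x t‖ ^ p))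
      (volume.restrict (Set.Icc (0:ℝ) 1))) ^ (1 / p)

/-- The `X_{∞,p}`-norm of a kernel on the triangle `Ω = {0 ≤ t ≤ x ≤ 1}`:
`‖f‖_{X_{∞,p}} = ( esssup_{x∈[0,1]} ∫_0^x |f(x,t)|^p dt )^{1/p}`. -/
noncomputable def XinfpNorm (p : ℝ) (f : ℝ → ℝ → ℂ) : ℝ≥0∞ :=
  (essSup (fun x => ∫⁻ t in Set.Icc (0:ℝ) x, ENNReal.ofReal (‖f x t‖ ^ p))
      (volume.restrict (Set.Icc (0:ℝ) 1))) ^ (1 / p)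

/-- Composition of kernels: `(N₁ * N₂)(x,t) = ∫_t^x N₁(x,ξ) N₂(ξ,t) dξ`. -/
noncomputable def kernelComp (N₁ N₂ : ℝ → ℝ → ℂ) : ℝ → ℝ → ℂ :=
  fun x t => ∫ ξ in t..x, N₁ x ξ * N₂ ξ t

/-- The spaces `X_{1,p}(Ω)` and `X_{∞,p}(Ω)` are Banach algebras under composition of
kernels: `‖N₁ * N₂‖ ≤ ‖N₁‖ ⬝ ‖N₂‖` in each of the two norms. -/
theorem stmt9 (p : ℝ) (hp : 1 ≤ p) (N₁ N₂ : ℝ → ℝ → ℂ)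
    (hm₁ : Measurable (Function.uncurry N₁)) (hm₂ : Measurable (Function.uncurry N₂)) :
    (X1pNorm p N₁ ≠ ⊤ → X1pNorm p N₂ ≠ ⊤ →
      X1pNorm p (kernelComp N₁ N₂) ≤ X1pNorm p N₁ * X1pNorm p N₂) ∧
    (XinfpNorm p N₁ ≠ ⊤ → XinfpNorm p N₂ ≠ ⊤ →
      XinfpNorm p (kernelComp N₁ N₂) ≤ XinfpNorm p N₁ * XinfpNorm p N₂) := by
  have hp0 : (0:ℝ) < p := lt_of_lt_of_le one_pos hp
  have hp0' : (0:ℝ) ≤ p := hp0.le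
  have hdiv : (0:ℝ) ≤ 1/p := by positivity
  constructor
  · -- the `X_{1,p}` case
    intro hN₁ hN₂
    have hXrw : ∀ f : ℝ → ℝ → ℂ, X1pNorm p f =
        (essSup (fun t => ∫⁻ x in Set.Icc t 1, (‖f x t‖₊ : ℝ≥0∞) ^ p)
          (volume.restrict (Set.Icc (0:ℝ) 1))) ^ (1/p) := by
      intro f
      unfold X1pNorm
      simp_rw [aux_ofReal _ hp0']
    set A₁ := essSup (fun t => ∫⁻ x in Set.Icc t 1, (‖N₁ x t‖₊ : ℝ≥0∞) ^ p)
        (volume.restrict (Set.Icc (0:ℝ) 1)) with hA₁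
    set A₂ := essSup (fun t => ∫⁻ x in Set.Icc t 1, (‖N₂ x t‖₊ : ℝ≥0∞) ^ p)
        (volume.restrict (Set.Icc (0:ℝ) 1)) with hA₂
    have e₁ : X1pNorm p N₁ = A₁ ^ (1/p) := hXrw N₁
    have e₂ : X1pNorm p N₂ = A₂ ^ (1/p) := hXrw N₂
    have hA₁top : A₁ ≠ ⊤ := by
      intro h
      rw [e₁, h, ENNReal.top_rpow_of_pos (by positivity)] at hN₁
      exact hN₁ rfl
    have hA₂top : A₂ ≠ ⊤ := by
      intro h
      rw [e₂, h, ENNReal.top_rpow_of_pos (by positivity)] at hN₂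
      exact hN₂ rfl
    rw [hXrw, e₁, e₂, ← ENNReal.mul_rpow_of_nonneg _ _ hdiv]
    refine ENNReal.rpow_le_rpow ?_ hdiv
    refine essSup_le_of_ae_le _ ?_
    have hae₁ : ∀ᵐ ξ ∂(volume.restrict (Set.Icc (0:ℝ) 1)),
        (∫⁻ x in Set.Icc ξ 1, (‖N₁ x ξ‖₊ : ℝ≥0∞) ^ p) ≤ A₁ := hA₁ ▸ ENNReal.ae_le_essSup _
    have hae₂ : ∀ᵐ t ∂(volume.restrict (Set.Icc (0:ℝ) 1)),
        (∫⁻ ξ in Set.Icc t 1, (‖N₂ ξ t‖₊ : ℝ≥0∞) ^ p) ≤ A₂ := hA₂ ▸ ENNReal.ae_le_essSup _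
    filter_upwards [hae₂, ae_restrict_mem measurableSet_Icc] with t ht₂ htmem
    obtain ⟨ht0, ht1⟩ := htmem
    set B := ∫⁻ ξ in Set.Icc t 1, (‖N₂ ξ t‖₊ : ℝ≥0∞) with hB
    have hmeas₂ : Measurable fun ξ => (‖N₂ ξ t‖₊ : ℝ≥0∞) :=
      (hm₂.comp (measurable_id.prodMk measurable_const)).nnnorm.coe_nnreal_ennreal
    have hBp : B ^ p ≤ A₂ := by
      refine le_trans (aux_jensen _ ?_ hp hmeas₂.aemeasurable) ht₂
      rw [Measure.restrict_apply_univ, Real.volume_Icc]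
      exact ENNReal.ofReal_le_one.mpr (by linarith)
    have hBtop : B ≠ ⊤ := by
      intro h
      rw [h, ENNReal.top_rpow_of_pos hp0, top_le_iff] at hBp
      exact hA₂top hBp
    have hBexp : B ^ (p - 1) ≠ ⊤ := ENNReal.rpow_ne_top_of_nonneg (by linarith) hBtop
    set H : ℝ → ℝ → ℝ≥0∞ := fun x ξ => (‖N₁ x ξ‖₊ : ℝ≥0∞) ^ p * (‖N₂ ξ t‖₊ : ℝ≥0∞) with hH
    set F : ℝ → ℝ → ℝ≥0∞ := fun x ξ => if ξ ≤ x then H x ξ else 0 with hF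
    have hFmeas : AEMeasurable (fun z : ℝ × ℝ => F z.1 z.2)
        ((volume.restrict (Set.Icc t 1)).prod (volume.restrict (Set.Icc t 1))) := by
      refine Measurable.aemeasurable ?_
      refine Measurable.ite (measurableSet_le measurable_snd measurable_fst) ?_ measurable_const
      exact (hm₁.nnnorm.coe_nnreal_ennreal.pow_const p).mul
        ((hm₂.comp (measurable_snd.prodMk measurable_const)).nnnorm.coe_nnreal_ennreal)
    calc ∫⁻ x in Set.Icc t 1, (‖kernelComp N₁ N₂ x t‖₊ : ℝ≥0∞) ^ p
        ≤ ∫⁻ x in Set.Icc t 1,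
            (∫⁻ ξ in Set.Icc t x, (‖N₁ x ξ‖₊ : ℝ≥0∞) * (‖N₂ ξ t‖₊ : ℝ≥0∞)) ^ p := by
          refine lintegral_mono_ae ?_
          filter_upwards [ae_restrict_mem measurableSet_Icc] with x hx
          refine ENNReal.rpow_le_rpow ?_ hp0'
          show (‖kernelComp N₁ N₂ x t‖₊ : ℝ≥0∞) ≤ _
          rw [kernelComp, intervalIntegral.integral_of_le hx.1]
          calc (‖∫ ξ in Set.Ioc t x, N₁ x ξ * N₂ ξ t‖₊ : ℝ≥0∞)
              ≤ ∫⁻ ξ in Set.Ioc t x, (‖N₁ x ξ * N₂ ξ t‖₊ : ℝ≥0∞) :=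
                enorm_integral_le_lintegral_enorm _
            _ = ∫⁻ ξ in Set.Ioc t x, (‖N₁ x ξ‖₊ : ℝ≥0∞) * (‖N₂ ξ t‖₊ : ℝ≥0∞) := by
                simp_rw [nnnorm_mul, ENNReal.coe_mul]
            _ ≤ _ := lintegral_mono_set Set.Ioc_subset_Icc_self
      _ ≤ ∫⁻ x in Set.Icc t 1, (∫⁻ ξ in Set.Icc t 1, F x ξ) * B ^ (p - 1) := by
          refine lintegral_mono_ae ?_
          filter_upwards [ae_restrict_mem measurableSet_Icc] with x hx
          have hmeas₁x : Measurable fun ξ => (‖N₁ x ξ‖₊ : ℝ≥0∞) :=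
            (hm₁.comp (measurable_const.prodMk measurable_id)).nnnorm.coe_nnreal_ennreal
          refine le_trans (aux_holder (volume.restrict (Set.Icc t x)) hp
            hmeas₁x.aemeasurable hmeas₂.aemeasurable) (mul_le_mul' ?_ ?_)
          · calc ∫⁻ ξ in Set.Icc t x, (‖N₁ x ξ‖₊ : ℝ≥0∞) ^ p * (‖N₂ ξ t‖₊ : ℝ≥0∞)
                = ∫⁻ ξ in Set.Icc t x, F x ξ := by
                  refine setLIntegral_congr_fun measurableSet_Icc (fun ξ hξ => ?_)
                  simp only [hF, hH, if_pos hξ.2]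
              _ ≤ ∫⁻ ξ in Set.Icc t 1, F x ξ :=
                  lintegral_mono_set (Set.Icc_subset_Icc_right hx.2)
          · exact ENNReal.rpow_le_rpow
              (lintegral_mono_set (Set.Icc_subset_Icc_right hx.2)) (by linarith)
      _ = (∫⁻ x in Set.Icc t 1, ∫⁻ ξ in Set.Icc t 1, F x ξ) * B ^ (p - 1) :=
          lintegral_mul_const' _ _ hBexp
      _ = (∫⁻ ξ in Set.Icc t 1, ∫⁻ x in Set.Icc t 1, F x ξ) * B ^ (p - 1) := by
          rw [lintegral_lintegral_swap hFmeas]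
      _ ≤ (A₁ * B) * B ^ (p - 1) := by
          refine mul_le_mul' ?_ le_rfl
          have hae₁' : ∀ᵐ ξ ∂(volume.restrict (Set.Icc t 1)),
              (∫⁻ x in Set.Icc ξ 1, (‖N₁ x ξ‖₊ : ℝ≥0∞) ^ p) ≤ A₁ :=
            ae_mono (Measure.restrict_mono (Set.Icc_subset_Icc_left ht0) le_rfl) hae₁
          have step : ∀ᵐ ξ ∂(volume.restrict (Set.Icc t 1)),
              (∫⁻ x in Set.Icc t 1, F x ξ) ≤ A₁ * (‖N₂ ξ t‖₊ : ℝ≥0∞) := by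
            filter_upwards [hae₁'] with ξ hξA
            calc ∫⁻ x in Set.Icc t 1, F x ξ
                = ∫⁻ x in Set.Icc t 1, (Set.Ici ξ).indicator (fun x => H x ξ) x := by
                  refine lintegral_congr fun x => ?_
                  simp [hF, Set.indicator_apply]
              _ = ∫⁻ x in Set.Ici ξ ∩ Set.Icc t 1, H x ξ := by
                  rw [lintegral_indicator measurableSet_Ici,
                    Measure.restrict_restrict measurableSet_Ici]
              _ ≤ ∫⁻ x in Set.Icc ξ 1, H x ξ := by
                  have hsub : Set.Ici ξ ∩ Set.Icc t 1 ⊆ Set.Icc ξ 1 := fun y hy => ⟨hy.1, hy.2.2⟩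
                  exact lintegral_mono' (Measure.restrict_mono hsub le_rfl) le_rfl
              _ = (∫⁻ x in Set.Icc ξ 1, (‖N₁ x ξ‖₊ : ℝ≥0∞) ^ p) * (‖N₂ ξ t‖₊ : ℝ≥0∞) :=
                  lintegral_mul_const' _ _ ENNReal.coe_ne_top
              _ ≤ A₁ * (‖N₂ ξ t‖₊ : ℝ≥0∞) := mul_le_mul_left hξA _
          calc ∫⁻ ξ in Set.Icc t 1, ∫⁻ x in Set.Icc t 1, F x ξ
              ≤ ∫⁻ ξ in Set.Icc t 1, A₁ * (‖N₂ ξ t‖₊ : ℝ≥0∞) := lintegral_mono_ae step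
            _ = A₁ * B := lintegral_const_mul' _ _ hA₁top
      _ ≤ A₁ * A₂ := by
          rw [mul_assoc]
          refine mul_le_mul_right ?_ _
          calc B * B ^ (p - 1) = B ^ (1:ℝ) * B ^ (p - 1) := by rw [ENNReal.rpow_one]
            _ = B ^ (1 + (p - 1)) := (ENNReal.rpow_add_of_nonneg _ _ zero_le_one (by linarith)).symm
            _ = B ^ p := by ring_nf
            _ ≤ A₂ := hBp
  · -- the `X_{∞,p}` case
    intro hN₁ hN₂
    have hXrw : ∀ f : ℝ → ℝ → ℂ, XinfpNorm p f =
        (essSup (fun x => ∫⁻ t in Set.Icc (0:ℝ) x, (‖f x t‖₊ : ℝ≥0∞) ^ p)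
          (volume.restrict (Set.Icc (0:ℝ) 1))) ^ (1/p) := by
      intro f
      unfold XinfpNorm
      simp_rw [aux_ofReal _ hp0']
    set A₁ := essSup (fun x => ∫⁻ t in Set.Icc (0:ℝ) x, (‖N₁ x t‖₊ : ℝ≥0∞) ^ p)
        (volume.restrict (Set.Icc (0:ℝ) 1)) with hA₁
    set A₂ := essSup (fun x => ∫⁻ t in Set.Icc (0:ℝ) x, (‖N₂ x t‖₊ : ℝ≥0∞) ^ p)
        (volume.restrict (Set.Icc (0:ℝ) 1)) with hA₂
    have e₁ : XinfpNorm p N₁ = A₁ ^ (1/p) := hXrw N₁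
    have e₂ : XinfpNorm p N₂ = A₂ ^ (1/p) := hXrw N₂
    have hA₁top : A₁ ≠ ⊤ := by
      intro h
      rw [e₁, h, ENNReal.top_rpow_of_pos (by positivity)] at hN₁
      exact hN₁ rfl
    have hA₂top : A₂ ≠ ⊤ := by
      intro h
      rw [e₂, h, ENNReal.top_rpow_of_pos (by positivity)] at hN₂
      exact hN₂ rfl
    rw [hXrw, e₁, e₂, ← ENNReal.mul_rpow_of_nonneg _ _ hdiv]
    refine ENNReal.rpow_le_rpow ?_ hdiv
    refine essSup_le_of_ae_le _ ?_
    have hae₁ : ∀ᵐ x ∂(volume.restrict (Set.Icc (0:ℝ) 1)),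
        (∫⁻ ξ in Set.Icc (0:ℝ) x, (‖N₁ x ξ‖₊ : ℝ≥0∞) ^ p) ≤ A₁ := hA₁ ▸ ENNReal.ae_le_essSup _
    have hae₂ : ∀ᵐ ξ ∂(volume.restrict (Set.Icc (0:ℝ) 1)),
        (∫⁻ u in Set.Icc (0:ℝ) ξ, (‖N₂ ξ u‖₊ : ℝ≥0∞) ^ p) ≤ A₂ := hA₂ ▸ ENNReal.ae_le_essSup _
    filter_upwards [hae₁, ae_restrict_mem measurableSet_Icc] with x hx₁ hxmem
    obtain ⟨hx0, hx1⟩ := hxmem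
    set B := ∫⁻ ξ in Set.Icc (0:ℝ) x, (‖N₁ x ξ‖₊ : ℝ≥0∞) with hB
    have hmeas₁ : Measurable fun ξ => (‖N₁ x ξ‖₊ : ℝ≥0∞) :=
      (hm₁.comp (measurable_const.prodMk measurable_id)).nnnorm.coe_nnreal_ennreal
    have hBp : B ^ p ≤ A₁ := by
      refine le_trans (aux_jensen _ ?_ hp hmeas₁.aemeasurable) hx₁
      rw [Measure.restrict_apply_univ, Real.volume_Icc]
      exact ENNReal.ofReal_le_one.mpr (by linarith)
    have hBtop : B ≠ ⊤ := by
      intro h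
      rw [h, ENNReal.top_rpow_of_pos hp0, top_le_iff] at hBp
      exact hA₁top hBp
    have hBexp : B ^ (p - 1) ≠ ⊤ := ENNReal.rpow_ne_top_of_nonneg (by linarith) hBtop
    set H : ℝ → ℝ → ℝ≥0∞ := fun t ξ => (‖N₂ ξ t‖₊ : ℝ≥0∞) ^ p * (‖N₁ x ξ‖₊ : ℝ≥0∞) with hH
    set F : ℝ → ℝ → ℝ≥0∞ := fun t ξ => if t ≤ ξ then H t ξ else 0 with hF
    have hFmeas : AEMeasurable (fun z : ℝ × ℝ => F z.1 z.2)
        ((volume.restrict (Set.Icc (0:ℝ) x)).prod (volume.restrict (Set.Icc (0:ℝ) x))) := by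
      refine Measurable.aemeasurable ?_
      refine Measurable.ite (measurableSet_le measurable_fst measurable_snd) ?_ measurable_const
      exact ((hm₂.comp (measurable_snd.prodMk measurable_fst)).nnnorm.coe_nnreal_ennreal.pow_const
        p).mul ((hm₁.comp (measurable_const.prodMk measurable_snd)).nnnorm.coe_nnreal_ennreal)
    calc ∫⁻ t in Set.Icc (0:ℝ) x, (‖kernelComp N₁ N₂ x t‖₊ : ℝ≥0∞) ^ p
        ≤ ∫⁻ t in Set.Icc (0:ℝ) x,
            (∫⁻ ξ in Set.Icc t x, (‖N₂ ξ t‖₊ : ℝ≥0∞) * (‖N₁ x ξ‖₊ : ℝ≥0∞)) ^ p := by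
          refine lintegral_mono_ae ?_
          filter_upwards [ae_restrict_mem measurableSet_Icc] with t ht
          refine ENNReal.rpow_le_rpow ?_ hp0'
          show (‖kernelComp N₁ N₂ x t‖₊ : ℝ≥0∞) ≤ _
          rw [kernelComp, intervalIntegral.integral_of_le ht.2]
          calc (‖∫ ξ in Set.Ioc t x, N₁ x ξ * N₂ ξ t‖₊ : ℝ≥0∞)
              ≤ ∫⁻ ξ in Set.Ioc t x, (‖N₁ x ξ * N₂ ξ t‖₊ : ℝ≥0∞) :=
                enorm_integral_le_lintegral_enorm _
            _ = ∫⁻ ξ in Set.Ioc t x, (‖N₂ ξ t‖₊ : ℝ≥0∞) * (‖N₁ x ξ‖₊ : ℝ≥0∞) := by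
                simp_rw [nnnorm_mul, ENNReal.coe_mul]
                exact lintegral_congr fun ξ => mul_comm _ _
            _ ≤ _ := lintegral_mono_set Set.Ioc_subset_Icc_self
      _ ≤ ∫⁻ t in Set.Icc (0:ℝ) x, (∫⁻ ξ in Set.Icc (0:ℝ) x, F t ξ) * B ^ (p - 1) := by
          refine lintegral_mono_ae ?_
          filter_upwards [ae_restrict_mem measurableSet_Icc] with t ht
          have hmeas₂t : Measurable fun ξ => (‖N₂ ξ t‖₊ : ℝ≥0∞) :=
            (hm₂.comp (measurable_id.prodMk measurable_const)).nnnorm.coe_nnreal_ennreal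
          refine le_trans (aux_holder (volume.restrict (Set.Icc t x)) hp
            hmeas₂t.aemeasurable hmeas₁.aemeasurable) (mul_le_mul' ?_ ?_)
          · calc ∫⁻ ξ in Set.Icc t x, (‖N₂ ξ t‖₊ : ℝ≥0∞) ^ p * (‖N₁ x ξ‖₊ : ℝ≥0∞)
                = ∫⁻ ξ in Set.Icc t x, F t ξ := by
                  refine setLIntegral_congr_fun measurableSet_Icc (fun ξ hξ => ?_)
                  simp only [hF, hH, if_pos hξ.1]
              _ ≤ ∫⁻ ξ in Set.Icc (0:ℝ) x, F t ξ :=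
                  lintegral_mono_set (Set.Icc_subset_Icc_left ht.1)
          · exact ENNReal.rpow_le_rpow
              (lintegral_mono_set (Set.Icc_subset_Icc_left ht.1)) (by linarith)
      _ = (∫⁻ t in Set.Icc (0:ℝ) x, ∫⁻ ξ in Set.Icc (0:ℝ) x, F t ξ) * B ^ (p - 1) :=
          lintegral_mul_const' _ _ hBexp
      _ = (∫⁻ ξ in Set.Icc (0:ℝ) x, ∫⁻ t in Set.Icc (0:ℝ) x, F t ξ) * B ^ (p - 1) := by
          rw [lintegral_lintegral_swap hFmeas]
      _ ≤ (A₂ * B) * B ^ (p - 1) := by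
          refine mul_le_mul' ?_ le_rfl
          have hae₂' : ∀ᵐ ξ ∂(volume.restrict (Set.Icc (0:ℝ) x)),
              (∫⁻ u in Set.Icc (0:ℝ) ξ, (‖N₂ ξ u‖₊ : ℝ≥0∞) ^ p) ≤ A₂ :=
            ae_mono (Measure.restrict_mono (Set.Icc_subset_Icc_right hx1) le_rfl) hae₂
          have step : ∀ᵐ ξ ∂(volume.restrict (Set.Icc (0:ℝ) x)),
              (∫⁻ t in Set.Icc (0:ℝ) x, F t ξ) ≤ A₂ * (‖N₁ x ξ‖₊ : ℝ≥0∞) := by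
            filter_upwards [hae₂'] with ξ hξA
            calc ∫⁻ t in Set.Icc (0:ℝ) x, F t ξ
                = ∫⁻ t in Set.Icc (0:ℝ) x, (Set.Iic ξ).indicator (fun t => H t ξ) t := by
                  refine lintegral_congr fun t => ?_
                  simp [hF, Set.indicator_apply]
              _ = ∫⁻ t in Set.Iic ξ ∩ Set.Icc (0:ℝ) x, H t ξ := by
                  rw [lintegral_indicator measurableSet_Iic,
                    Measure.restrict_restrict measurableSet_Iic]
              _ ≤ ∫⁻ t in Set.Icc (0:ℝ) ξ, H t ξ := by
                  have hsub : Set.Iic ξ ∩ Set.Icc (0:ℝ) x ⊆ Set.Icc (0:ℝ) ξ :=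
                    fun y hy => ⟨hy.2.1, hy.1⟩
                  exact lintegral_mono' (Measure.restrict_mono hsub le_rfl) le_rfl
              _ = (∫⁻ t in Set.Icc (0:ℝ) ξ, (‖N₂ ξ t‖₊ : ℝ≥0∞) ^ p) * (‖N₁ x ξ‖₊ : ℝ≥0∞) :=
                  lintegral_mul_const' _ _ ENNReal.coe_ne_top
              _ ≤ A₂ * (‖N₁ x ξ‖₊ : ℝ≥0∞) := mul_le_mul_left hξA _
          calc ∫⁻ ξ in Set.Icc (0:ℝ) x, ∫⁻ t in Set.Icc (0:ℝ) x, F t ξ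
              ≤ ∫⁻ ξ in Set.Icc (0:ℝ) x, A₂ * (‖N₁ x ξ‖₊ : ℝ≥0∞) := lintegral_mono_ae step
            _ = A₂ * B := lintegral_const_mul' _ _ hA₂top
      _ ≤ A₁ * A₂ := by
          rw [mul_assoc, mul_comm A₂]
          refine mul_le_mul_left ?_ _
          calc B * B ^ (p - 1) = B ^ (1:ℝ) * B ^ (p - 1) := by rw [ENNReal.rpow_one]
            _ = B ^ (1 + (p - 1)) := (ENNReal.rpow_add_of_nonneg _ _ zero_le_one (by linarith)).symm
            _ = B ^ p := by ring_nf
            _ ≤ A₁ := hBp
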